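/- arXiv:2512.23694 — 3 statements merged into one kernel-verified Lean document; each statement's English description precedes it below -/
import Mathlib

section
/- Let (Ω, 𝔽, μ) be a probability space, 𝒮 a measurable space, 𝒜 a nonempty finite set, and let S : Ω → 𝒮, A : Ω → 𝒜, R : Ω → ℝ, S' : Ω → 𝒮 be measurable with R bounded. Let γ ∈ [0,1) and let v : 𝒮 → ℝ be bounded measurable. Let b₀, π : 𝒮 × 𝒜 → ℝ be measurable with, for each s, b₀(s, ·) and π(s, ·) nonnegative and summing to 1 over 𝒜, and b₀(s, a) > 0 for all (s, a); set w := π / b₀. Assume: (i) the conditional law of A given S is b₀, i.e., for every bounded measurable g : 𝒮 × 𝒜 → ℝ, the conditional expectation of g(S, A) given the σ-algebra generated by S equals Σ_{a ∈ 𝒜} b₀(S, a)·g(S, a) almost surely; and (ii) there is a bounded measurable q : 𝒮 × 𝒜 → ℝ such that the conditional expectation of R + γ·v(S') given the σ-algebra generated by (S, A) equals q(S, A) almost surely. Let ŵ, q̂ : 𝒮 × 𝒜 → ℝ be bounded measurable, and define the doubly robust pseudo-outcome χ := Σ_{a ∈ 𝒜} π(S, a)·q̂(S, a) + ŵ(S,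 A)·(R + γ·v(S') − q̂(S, A)). Then, almost surely, the conditional expectation of χ given the σ-algebra generated by S, minus Σ_{a ∈ 𝒜} π(S, a)·q(S, a), equals Σ_{a ∈ 𝒜} b₀(S, a)·(w(S, a) − ŵ(S, a))·(q̂(S, a) − q(S, a)). -/
open MeasureTheory ProbabilityTheory

lemma my_int_of_bound {Ω : Type*} [MeasurableSpace Ω] {μ : Measure Ω} [IsFiniteMeasure μ]
    {f : Ω → ℝ} (hf : AEStronglyMeasurable f μ) (C : ℝ) (h : ∀ ω, |f ω| ≤ C) :
    Integrable f μ :=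
  (memLp_top_of_bound hf C (Filter.Eventually.of_forall (by simpa using h))).integrable le_top

/-- Doubly robust error identity for the fitted Bellman target: conditionally on the
state `S`, the bias of the doubly robust pseudo-outcome `χ` relative to the true
policy-marginalized Bellman target `∑ₐ π(S,a) q(S,a)` equals
`∑ₐ b₀(S,a) (w(S,a) − what(S,a)) (qhat(S,a) − q(S,a))` with `w = π / b₀`. -/
theorem doubly_robust_bellman_target_error
    {Ω 𝒮 𝒜 : Type*} [MeasurableSpace Ω] [MeasurableSpace 𝒮]
    [MeasurableSpace 𝒜] [Fintype 𝒜] [Nonempty 𝒜]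
    (μ : Measure Ω) [IsProbabilityMeasure μ]
    (S : Ω → 𝒮) (A : Ω → 𝒜) (R : Ω → ℝ) (S' : Ω → 𝒮)
    (hS : Measurable S) (hA : Measurable A) (hR : Measurable R) (hS' : Measurable S')
    (hRb : ∃ C, ∀ ω, |R ω| ≤ C)
    (γ : ℝ) (hγ0 : 0 ≤ γ) (hγ1 : γ < 1)
    (v : 𝒮 → ℝ) (hv : Measurable v) (hvb : ∃ C, ∀ s, |v s| ≤ C)
    (b₀ π : 𝒮 → 𝒜 → ℝ)
    (hb₀ : Measurable fun p : 𝒮 × 𝒜 => b₀ p.1 p.2)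
    (hπ : Measurable fun p : 𝒮 × 𝒜 => π p.1 p.2)
    (hb₀pos : ∀ s a, 0 < b₀ s a) (hπnn : ∀ s a, 0 ≤ π s a)
    (hb₀sum : ∀ s, ∑ a, b₀ s a = 1) (hπsum : ∀ s, ∑ a, π s a = 1)
    -- (i) the conditional law of A given S is b₀
    (hbehavior : ∀ g : 𝒮 → 𝒜 → ℝ, (Measurable fun p : 𝒮 × 𝒜 => g p.1 p.2) →
      (∃ C, ∀ s a, |g s a| ≤ C) →
      μ[fun ω => g (S ω) (A ω) | MeasurableSpace.comap S inferInstance]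
        =ᵐ[μ] fun ω => ∑ a, b₀ (S ω) a * g (S ω) a)
    -- (ii) q is the true Q-function under v
    (q : 𝒮 → 𝒜 → ℝ) (hq : Measurable fun p : 𝒮 × 𝒜 => q p.1 p.2)
    (hqb : ∃ C, ∀ s a, |q s a| ≤ C)
    (hqce : μ[fun ω => R ω + γ * v (S' ω) |
        MeasurableSpace.comap (fun ω => (S ω, A ω)) inferInstance]
      =ᵐ[μ] fun ω => q (S ω) (A ω))
    -- estimated nuisances
    (what qhat : 𝒮 → 𝒜 → ℝ)
    (hwhat : Measurable fun p : 𝒮 × 𝒜 => what p.1 p.2)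
    (hqhat : Measurable fun p : 𝒮 × 𝒜 => qhat p.1 p.2)
    (hwhatb : ∃ C, ∀ s a, |what s a| ≤ C) (hqhatb : ∃ C, ∀ s a, |qhat s a| ≤ C)
    -- the doubly robust pseudo-outcome
    (χ : Ω → ℝ)
    (hχ : ∀ ω, χ ω = (∑ a, π (S ω) a * qhat (S ω) a)
        + what (S ω) (A ω) * (R ω + γ * v (S' ω) - qhat (S ω) (A ω))) :
    (fun ω => (μ[χ | MeasurableSpace.comap S inferInstance]) ω
        - ∑ a, π (S ω) a * q (S ω) a)
      =ᵐ[μ] fun ω => ∑ a,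
        b₀ (S ω) a * (π (S ω) a / b₀ (S ω) a - what (S ω) a) * (qhat (S ω) a - q (S ω) a) := by
  classical
  obtain ⟨CR, hCR⟩ := hRb
  obtain ⟨Cv, hCv⟩ := hvb
  obtain ⟨Cq, hCq⟩ := hqb
  obtain ⟨Cw, hCw⟩ := hwhatb
  obtain ⟨Cqh, hCqh⟩ := hqhatb
  have hm12 : (MeasurableSpace.comap S inferInstance) ≤ (MeasurableSpace.comap (fun ω => (S ω, A ω)) inferInstance) := by
    rintro t ⟨u, hu, rfl⟩
    exact ⟨Prod.fst ⁻¹' u, measurable_fst hu, rfl⟩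
  have hm2 : (MeasurableSpace.comap (fun ω => (S ω, A ω)) inferInstance) ≤ ‹MeasurableSpace Ω› := (hS.prodMk hA).comap_le
  have hpairm : Measurable[(MeasurableSpace.comap (fun ω => (S ω, A ω)) inferInstance)] (fun ω => (S ω, A ω)) := comap_measurable _
  -- notation
  set Y : Ω → ℝ := fun ω => R ω + γ * v (S' ω) with hYdef
  set W : Ω → ℝ := fun ω => what (S ω) (A ω) with hWdef
  set F : Ω → ℝ := fun ω => (∑ a, π (S ω) a * qhat (S ω) a)
      - what (S ω) (A ω) * qhat (S ω) (A ω) with hFdef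
  -- measurability and boundedness facts
  have hYm : Measurable Y := hR.add (measurable_const.mul (hv.comp hS'))
  have hYb : ∀ ω, |Y ω| ≤ CR + γ * Cv := by
    intro ω
    calc |Y ω| ≤ |R ω| + |γ * v (S' ω)| := abs_add_le _ _
    _ ≤ CR + γ * Cv := by
        refine add_le_add (hCR ω) ?_
        rw [abs_mul, abs_of_nonneg hγ0]
        exact mul_le_mul_of_nonneg_left (hCv _) hγ0
  have hYint : Integrable Y μ := my_int_of_bound hYm.aestronglyMeasurable _ hYb
  have hFm2 : StronglyMeasurable[(MeasurableSpace.comap (fun ω => (S ω, A ω)) inferInstance)] F := by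
    refine Measurable.stronglyMeasurable ?_
    have h1 : Measurable fun p : 𝒮 × 𝒜 =>
        (∑ a, π p.1 a * qhat p.1 a) - what p.1 p.2 * qhat p.1 p.2 := by
      refine Measurable.sub ?_ (hwhat.mul hqhat)
      refine Finset.measurable_sum _ fun a _ => ?_
      exact ((hπ.comp (measurable_id.prodMk measurable_const)).comp measurable_fst).mul
        ((hqhat.comp (measurable_id.prodMk measurable_const)).comp measurable_fst)
    exact h1.comp hpairm
  have hWm2 : StronglyMeasurable[(MeasurableSpace.comap (fun ω => (S ω, A ω)) inferInstance)] W := by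
    exact (hwhat.comp hpairm).stronglyMeasurable
  have hFb : ∀ ω, |F ω| ≤ (Fintype.card 𝒜) * (1 * Cqh) + Cw * Cqh := by
    intro ω
    have h1 : |∑ a, π (S ω) a * qhat (S ω) a| ≤ (Fintype.card 𝒜) * (1 * Cqh) := by
      calc |∑ a, π (S ω) a * qhat (S ω) a| ≤ ∑ a, |π (S ω) a * qhat (S ω) a| :=
        Finset.abs_sum_le_sum_abs _ _
      _ ≤ ∑ _a : 𝒜, 1 * Cqh := by
          refine Finset.sum_le_sum fun a _ => ?_
          rw [abs_mul]
          refine mul_le_mul ?_ (hCqh _ _) (abs_nonneg _) zero_le_one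
          rw [abs_of_nonneg (hπnn _ _)]
          calc π (S ω) a ≤ ∑ a', π (S ω) a' :=
            Finset.single_le_sum (fun a' _ => hπnn _ a') (Finset.mem_univ a)
          _ = 1 := hπsum _
      _ = (Fintype.card 𝒜) * (1 * Cqh) := by
          rw [Finset.sum_const, Finset.card_univ, nsmul_eq_mul]
    calc |F ω| ≤ |∑ a, π (S ω) a * qhat (S ω) a| + |what (S ω) (A ω) * qhat (S ω) (A ω)| :=
      abs_sub _ _
    _ ≤ (Fintype.card 𝒜) * (1 * Cqh) + Cw * Cqh := by
        refine add_le_add h1 ?_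
        rw [abs_mul]
        exact mul_le_mul (hCw (S ω) (A ω)) (hCqh (S ω) (A ω)) (abs_nonneg _)
          ((abs_nonneg (what (S ω) (A ω))).trans (hCw (S ω) (A ω)))
  have hFint : Integrable F μ := my_int_of_bound (hFm2.mono hm2).aestronglyMeasurable _ hFb
  have hWYint : Integrable (W * Y) μ := by
    refine my_int_of_bound ?_ (Cw * (CR + γ * Cv)) ?_
    · exact (((hwhat.comp (hS.prodMk hA)).mul hYm)).aestronglyMeasurable
    · intro ω
      rw [Pi.mul_apply, abs_mul]
      exact mul_le_mul (hCw (S ω) (A ω)) (hYb ω) (abs_nonneg _)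
        ((abs_nonneg (what (S ω) (A ω))).trans (hCw (S ω) (A ω)))
  have hχeq : χ = F + W * Y := by
    funext ω; simp only [hχ ω, Pi.add_apply, Pi.mul_apply, hFdef, hWdef, hYdef]; ring
  -- Step A : condexp given m2
  have hstepA : μ[χ | (MeasurableSpace.comap (fun ω => (S ω, A ω)) inferInstance)] =ᵐ[μ] fun ω => F ω + W ω * q (S ω) (A ω) := by
    rw [hχeq]
    have h1 := condExp_add (m := (MeasurableSpace.comap (fun ω => (S ω, A ω)) inferInstance)) hFint hWYint
    have h2 : μ[F | (MeasurableSpace.comap (fun ω => (S ω, A ω)) inferInstance)] =ᵐ[μ] F := by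
      exact Filter.EventuallyEq.of_eq (condExp_of_stronglyMeasurable hm2 hFm2 hFint)
    have h3 : μ[W * Y | (MeasurableSpace.comap (fun ω => (S ω, A ω)) inferInstance)] =ᵐ[μ] W * μ[Y | (MeasurableSpace.comap (fun ω => (S ω, A ω)) inferInstance)] := by
      refine condExp_stronglyMeasurable_mul_of_bound hm2 hWm2 hYint Cw ?_
      exact Filter.Eventually.of_forall fun ω => by simpa using hCw (S ω) (A ω)
    filter_upwards [h1, h2, h3, hqce] with ω h1 h2 h3 h4
    simp only [Pi.add_apply, Pi.mul_apply] at *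
    rw [h1, h2, h3]
    congr 1
    exact congrArg _ h4
  -- the m2-conditional expectation as a function of (S, A)
  set G : 𝒮 → 𝒜 → ℝ := fun s a => (∑ a', π s a' * qhat s a')
      + what s a * (q s a - qhat s a) with hGdef
  have hstepA' : μ[χ | (MeasurableSpace.comap (fun ω => (S ω, A ω)) inferInstance)] =ᵐ[μ] fun ω => G (S ω) (A ω) := by
    filter_upwards [hstepA] with ω h
    rw [h]; simp only [hGdef, hFdef, hWdef]; ring
  -- Step B : tower property
  have hGm : Measurable fun p : 𝒮 × 𝒜 => G p.1 p.2 := by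
    refine Measurable.add ?_ (hwhat.mul (hq.sub hqhat))
    refine Finset.measurable_sum _ fun a _ => ?_
    exact ((hπ.comp (measurable_id.prodMk measurable_const)).comp measurable_fst).mul
      ((hqhat.comp (measurable_id.prodMk measurable_const)).comp measurable_fst)
  have hGb : ∃ C, ∀ s a, |G s a| ≤ C := by
    refine ⟨(Fintype.card 𝒜) * (1 * Cqh) + Cw * (Cq + Cqh), fun s a => ?_⟩
    have h1 : |∑ a', π s a' * qhat s a'| ≤ (Fintype.card 𝒜) * (1 * Cqh) := by
      calc |∑ a', π s a' * qhat s a'| ≤ ∑ a', |π s a' * qhat s a'| :=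
        Finset.abs_sum_le_sum_abs _ _
      _ ≤ ∑ _a : 𝒜, 1 * Cqh := by
          refine Finset.sum_le_sum fun a' _ => ?_
          rw [abs_mul]
          refine mul_le_mul ?_ (hCqh _ _) (abs_nonneg _) zero_le_one
          rw [abs_of_nonneg (hπnn _ _)]
          calc π s a' ≤ ∑ a'', π s a'' :=
            Finset.single_le_sum (fun a'' _ => hπnn _ a'') (Finset.mem_univ a')
          _ = 1 := hπsum _
      _ = (Fintype.card 𝒜) * (1 * Cqh) := by
          rw [Finset.sum_const, Finset.card_univ, nsmul_eq_mul]
    calc |G s a| ≤ |∑ a', π s a' * qhat s a'| + |what s a * (q s a - qhat s a)| := abs_add_le _ _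
    _ ≤ (Fintype.card 𝒜) * (1 * Cqh) + Cw * (Cq + Cqh) := by
        refine add_le_add h1 ?_
        rw [abs_mul]
        exact mul_le_mul (hCw s a)
          ((abs_sub (q s a) (qhat s a)).trans (add_le_add (hCq s a) (hCqh s a)))
          (abs_nonneg _) ((abs_nonneg (what s a)).trans (hCw s a))
  have htower : μ[χ | (MeasurableSpace.comap S inferInstance)] =ᵐ[μ] fun ω => ∑ a, b₀ (S ω) a * G (S ω) a := by
    have h1 : μ[χ | (MeasurableSpace.comap S inferInstance)] =ᵐ[μ] μ[μ[χ | (MeasurableSpace.comap (fun ω => (S ω, A ω)) inferInstance)] | (MeasurableSpace.comap S inferInstance)] := (condExp_condExp_of_le hm12 hm2).symm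
    have h2 : μ[μ[χ | (MeasurableSpace.comap (fun ω => (S ω, A ω)) inferInstance)] | (MeasurableSpace.comap S inferInstance)] =ᵐ[μ] μ[fun ω => G (S ω) (A ω) | (MeasurableSpace.comap S inferInstance)] :=
      condExp_congr_ae hstepA'
    exact (h1.trans h2).trans (hbehavior G hGm hGb)
  -- final algebraic identity
  filter_upwards [htower] with ω h
  rw [h]
  have hb1 : ∑ a, b₀ (S ω) a * G (S ω) a
      = (∑ a', π (S ω) a' * qhat (S ω) a')
        + ∑ a, b₀ (S ω) a * (what (S ω) a * (q (S ω) a - qhat (S ω) a)) := by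
    simp only [hGdef, mul_add, Finset.sum_add_distrib, ← Finset.sum_mul, hb₀sum, one_mul]
  rw [hb1]
  have hrhs : ∀ a, b₀ (S ω) a * (π (S ω) a / b₀ (S ω) a - what (S ω) a) * (qhat (S ω) a - q (S ω) a)
      = π (S ω) a * qhat (S ω) a
        + b₀ (S ω) a * (what (S ω) a * (q (S ω) a - qhat (S ω) a))
        - π (S ω) a * q (S ω) a := by
    intro a
    have hb := (hb₀pos (S ω) a).ne'
    field_simp
    ring
  simp only [hrhs]
  rw [Finset.sum_sub_distrib, Finset.sum_add_distrib]
end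

section
/- Let S be a measurable space, γ ∈ [0,1), P a Markov kernel on S with associated operator (Pf)(s) := ∫ f(s') P(s, ds'), and r : S → ℝ bounded measurable. Let v₀ : S → ℝ be bounded measurable with v₀ = r + γ·P v₀ pointwise. Let K be a Markov kernel on S, let μ be a probability measure on S stationary for K, and let r̃, h₀, v̂₀, v̂ : S → ℝ be bounded measurable functions such that: (i) v̂₀ = r̃ + γ·K v̂₀ holds μ-almost everywhere (v̂₀ is the fixed point of the coarsened Bellman operator, with K the coarsened transition kernel E_π[f(S') | v̂(S)] and r̃ the coarsened reward E[r | v̂(S)]); and (ii) r̃ + γ·K v₀ = h₀ holds μ-almost everywhere (h₀ is the projection of v₀ onto functions of v̂). Then ‖v̂ − v₀‖_{L²(μ)} ≤ (1/(1−γ))·‖h₀ − v₀‖_{L²(μ)} + ‖v̂ − v̂₀‖_{L²(μ)}. -/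
open MeasureTheory ProbabilityTheory

section CRBAux
variable {S : Type*} [MeasurableSpace S]

lemma crb_integrable {ν : Measure S} [IsProbabilityMeasure ν] {f : S → ℝ} {C : ℝ}
    (hm : Measurable f) (hb : ∀ s, |f s| ≤ C) : Integrable f ν :=
  (integrable_const C).mono' hm.aestronglyMeasurable
    (Filter.Eventually.of_forall fun s => by simpa using hb s)

lemma crb_memℒp {ν : Measure S} [IsProbabilityMeasure ν] {f : S → ℝ} {C : ℝ}
    (hm : Measurable f) (hb : ∀ s, |f s| ≤ C) : MemLp f 2 ν :=
  MemLp.of_bound hm.aestronglyMeasurable C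
    (Filter.Eventually.of_forall fun s => by simpa using hb s)

lemma crb_sqrt_eq {ν : Measure S} {f : S → ℝ} (hf : MemLp f 2 ν) :
    Real.sqrt (∫ s, f s ^ 2 ∂ν) = (eLpNorm f 2 ν).toReal := by
  rw [hf.eLpNorm_eq_integral_rpow_norm two_ne_zero ENNReal.ofNat_ne_top,
    ENNReal.toReal_ofReal (Real.rpow_nonneg (integral_nonneg fun s => by positivity) _),
    Real.sqrt_eq_rpow]
  norm_num

lemma crb_triangle {ν : Measure S} {f g : S → ℝ} (hf : MemLp f 2 ν) (hg : MemLp g 2 ν) :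
    Real.sqrt (∫ s, (f s + g s) ^ 2 ∂ν)
      ≤ Real.sqrt (∫ s, f s ^ 2 ∂ν) + Real.sqrt (∫ s, g s ^ 2 ∂ν) := by
  have h1 : Real.sqrt (∫ s, (f s + g s) ^ 2 ∂ν) = (eLpNorm (f + g) 2 ν).toReal := by
    simpa [Pi.add_apply] using crb_sqrt_eq (hf.add hg)
  rw [h1, crb_sqrt_eq hf, crb_sqrt_eq hg]
  have h := eLpNorm_add_le hf.aestronglyMeasurable hg.aestronglyMeasurable
    (one_le_two : (1 : ENNReal) ≤ 2)
  calc (eLpNorm (f + g) 2 ν).toReal ≤ (eLpNorm f 2 ν + eLpNorm g 2 ν).toReal :=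
        ENNReal.toReal_mono (ENNReal.add_ne_top.2 ⟨hf.eLpNorm_ne_top, hg.eLpNorm_ne_top⟩) h
    _ = (eLpNorm f 2 ν).toReal + (eLpNorm g 2 ν).toReal :=
        ENNReal.toReal_add hf.eLpNorm_ne_top hg.eLpNorm_ne_top

/-- Jensen: `(∫ f)² ≤ ∫ f²` over a probability measure. -/
lemma crb_jensen {ν : Measure S} [IsProbabilityMeasure ν] {f : S → ℝ}
    (hf : Integrable f ν) (hf2 : Integrable (fun s => f s ^ 2) ν) :
    (∫ s, f s ∂ν) ^ 2 ≤ ∫ s, f s ^ 2 ∂ν := by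
  set c := ∫ s, f s ∂ν with hc
  have h0 : 0 ≤ ∫ s, (f s - c) ^ 2 ∂ν := integral_nonneg fun s => sq_nonneg _
  have h1 : Integrable (fun s => 2 * c * f s) ν := hf.const_mul _
  have h2 : Integrable (fun s => f s ^ 2 - 2 * c * f s) ν := hf2.sub h1
  have hexp : ∫ s, (f s - c) ^ 2 ∂ν = (∫ s, f s ^ 2 ∂ν) - 2 * c * c + c ^ 2 := by
    have heq : ∀ s, (f s - c) ^ 2 = (f s ^ 2 - 2 * c * f s) + c ^ 2 := fun s => by ring
    calc ∫ s, (f s - c) ^ 2 ∂ν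
        = ∫ s, ((f s ^ 2 - 2 * c * f s) + c ^ 2) ∂ν :=
          integral_congr_ae (Filter.Eventually.of_forall fun s => heq s)
      _ = (∫ s, (f s ^ 2 - 2 * c * f s) ∂ν) + ∫ _, c ^ 2 ∂ν := integral_add h2 (integrable_const _)
      _ = ((∫ s, f s ^ 2 ∂ν) - ∫ s, 2 * c * f s ∂ν) + c ^ 2 := by
          rw [integral_sub hf2 h1, integral_const]; simp
      _ = (∫ s, f s ^ 2 ∂ν) - 2 * c * c + c ^ 2 := by rw [integral_const_mul, ← hc]
  nlinarith [h0, hexp]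

end CRBAux

/-- Calibration–refinement bound: the `L²(μ)` estimation error of a value predictor `v̂`
is bounded by `(1-γ)⁻¹` times the refinement (projection) error of the true value `v₀`
plus the calibration error `‖v̂ − v̂₀‖`, where `v̂₀` is the fixed point of the coarsened
Bellman operator with kernel `K` and reward `r̃`, and `μ` is stationary for `K`. -/
theorem calibration_refinement_bound
    {S : Type*} [MeasurableSpace S]
    (γ : ℝ) (hγ0 : 0 ≤ γ) (hγ1 : γ < 1)
    (P : Kernel S S) [IsMarkovKernel P]
    (r : S → ℝ) (hr : Measurable r) (hrb : ∃ C, ∀ s, |r s| ≤ C)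
    (v₀ : S → ℝ) (hv₀m : Measurable v₀) (hv₀b : ∃ C, ∀ s, |v₀ s| ≤ C)
    (hfix : ∀ s, v₀ s = r s + γ * ∫ s', v₀ s' ∂(P s))
    (K : Kernel S S) [IsMarkovKernel K]
    (μ : Measure S) [IsProbabilityMeasure μ]
    (hstat : μ.bind (fun s => K s) = μ)
    (rtil h₀ vhat₀ vhat : S → ℝ)
    (hrtilm : Measurable rtil) (hrtilb : ∃ C, ∀ s, |rtil s| ≤ C)
    (hh₀m : Measurable h₀) (hh₀b : ∃ C, ∀ s, |h₀ s| ≤ C)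
    (hvhat₀m : Measurable vhat₀) (hvhat₀b : ∃ C, ∀ s, |vhat₀ s| ≤ C)
    (hvhatm : Measurable vhat) (hvhatb : ∃ C, ∀ s, |vhat s| ≤ C)
    -- (i) v̂₀ is the fixed point of the coarsened Bellman operator
    (hfix' : vhat₀ =ᵐ[μ] fun s => rtil s + γ * ∫ s', vhat₀ s' ∂(K s))
    -- (ii) h₀ is the projection of v₀: r̃ + γ K v₀ = h₀ μ-a.e.
    (hproj : (fun s => rtil s + γ * ∫ s', v₀ s' ∂(K s)) =ᵐ[μ] h₀) :
    Real.sqrt (∫ s, (vhat s - v₀ s) ^ 2 ∂μ)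
      ≤ (1 / (1 - γ)) * Real.sqrt (∫ s, (h₀ s - v₀ s) ^ 2 ∂μ)
        + Real.sqrt (∫ s, (vhat s - vhat₀ s) ^ 2 ∂μ) := by
  obtain ⟨C₀, hC₀⟩ := hv₀b
  obtain ⟨C₁, hC₁⟩ := hvhat₀b
  obtain ⟨C₂, hC₂⟩ := hvhatb
  obtain ⟨C₃, hC₃⟩ := hh₀b
  set g : S → ℝ := fun s => vhat₀ s - v₀ s with hg
  have hgm : Measurable g := hvhat₀m.sub hv₀m
  have hgb : ∀ s, |g s| ≤ C₁ + C₀ := fun s =>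
    (abs_sub _ _).trans (add_le_add (hC₁ s) (hC₀ s))
  have hg2b : ∀ s', |g s' ^ 2| ≤ (C₁ + C₀) ^ 2 := fun s' => by
    rw [abs_of_nonneg (sq_nonneg _)]
    calc g s' ^ 2 = |g s'| ^ 2 := (sq_abs _).symm
      _ ≤ (C₁ + C₀) ^ 2 := by have := hgb s'; nlinarith [abs_nonneg (g s')]
  set Kg : S → ℝ := fun s => ∫ s', g s' ∂(K s) with hKg
  have hKgm : Measurable Kg := by
    have h : StronglyMeasurable (Function.uncurry fun (_ : S) (y : S) => g y) :=
      (hgm.comp measurable_snd).stronglyMeasurable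
    exact h.integral_kernel_prod_right.measurable
  have hKgb : ∀ s, |Kg s| ≤ C₁ + C₀ := by
    intro s
    have h := norm_integral_le_of_norm_le_const (μ := K s) (f := g) (C := C₁ + C₀)
      (Filter.Eventually.of_forall fun s' => by simpa using hgb s')
    simpa using h
  have hjensen : ∀ s, Kg s ^ 2 ≤ ∫ s', g s' ^ 2 ∂(K s) := fun s =>
    crb_jensen (crb_integrable hgm hgb) (crb_integrable (hgm.pow_const 2) hg2b)
  set Kg2 : S → ℝ := fun s => ∫ s', g s' ^ 2 ∂(K s) with hKg2
  have hKg2m : Measurable Kg2 := by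
    have h : StronglyMeasurable (Function.uncurry fun (_ : S) (y : S) => g y ^ 2) :=
      ((hgm.pow_const 2).comp measurable_snd).stronglyMeasurable
    exact h.integral_kernel_prod_right.measurable
  have hKg2b : ∀ s, |Kg2 s| ≤ (C₁ + C₀) ^ 2 := by
    intro s
    have h := norm_integral_le_of_norm_le_const (μ := K s) (f := fun s' => g s' ^ 2)
      (C := (C₁ + C₀) ^ 2)
      (Filter.Eventually.of_forall fun s' => by simpa using hg2b s')
    simpa using h
  -- stationarity: ∫ Kg2 dμ = ∫ g² dμ
  have hstat2 : ∫ s, Kg2 s ∂μ = ∫ s, g s ^ 2 ∂μ := by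
    have hKmeas : Measurable fun s => (K s : Measure S) := K.measurable
    have hg2e : Measurable fun s => ENNReal.ofReal (g s ^ 2) :=
      (hgm.pow_const 2).ennreal_ofReal
    have hlin : ∫⁻ s, ENNReal.ofReal (g s ^ 2) ∂μ
        = ∫⁻ s, ∫⁻ s', ENNReal.ofReal (g s' ^ 2) ∂(K s) ∂μ := by
      conv_lhs => rw [← hstat]
      exact Measure.lintegral_bind hKmeas.aemeasurable hg2e.aemeasurable
    have hinner : ∀ s, ∫⁻ s', ENNReal.ofReal (g s' ^ 2) ∂(K s) = ENNReal.ofReal (Kg2 s) := by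
      intro s
      rw [← ofReal_integral_eq_lintegral_ofReal (crb_integrable (hgm.pow_const 2) hg2b)
        (Filter.Eventually.of_forall fun s' => sq_nonneg _)]
    have hl : ∫ s, Kg2 s ∂μ = (∫⁻ s, ENNReal.ofReal (Kg2 s) ∂μ).toReal := by
      rw [integral_eq_lintegral_of_nonneg_ae
        (Filter.Eventually.of_forall fun s => integral_nonneg fun s' => sq_nonneg _)
        hKg2m.aestronglyMeasurable]
    have hrr : ∫ s, g s ^ 2 ∂μ = (∫⁻ s, ENNReal.ofReal (g s ^ 2) ∂μ).toReal := by
      rw [integral_eq_lintegral_of_nonneg_ae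
        (Filter.Eventually.of_forall fun s => sq_nonneg _)
        (hgm.pow_const 2).aestronglyMeasurable]
    rw [hl, hrr, hlin]
    congr 1
    exact lintegral_congr fun s => (hinner s).symm
  have hKgsqb : ∀ s, |Kg s ^ 2| ≤ (C₁ + C₀) ^ 2 := fun s => by
    rw [abs_of_nonneg (sq_nonneg _)]
    calc Kg s ^ 2 = |Kg s| ^ 2 := (sq_abs _).symm
      _ ≤ (C₁ + C₀) ^ 2 := by have := hKgb s; nlinarith [abs_nonneg (Kg s)]
  have hcontract : ∫ s, Kg s ^ 2 ∂μ ≤ ∫ s, g s ^ 2 ∂μ := by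
    rw [← hstat2]
    exact integral_mono (crb_integrable (hKgm.pow_const 2) hKgsqb)
      (crb_integrable hKg2m hKg2b) hjensen
  -- a.e. identity: g = (h₀ - v₀) + γ • Kg
  have hdecomp : g =ᵐ[μ] fun s => (h₀ s - v₀ s) + γ * Kg s := by
    filter_upwards [hfix', hproj.symm] with s h1 h2
    have hintv : ∫ s', vhat₀ s' ∂(K s) - ∫ s', v₀ s' ∂(K s) = Kg s :=
      (integral_sub (crb_integrable hvhat₀m hC₁) (crb_integrable hv₀m hC₀)).symm
    have h1' : vhat₀ s = rtil s + γ * ∫ s', vhat₀ s' ∂(K s) := h1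
    have h2' : h₀ s = rtil s + γ * ∫ s', v₀ s' ∂(K s) := h2
    have hgoal : g s = (h₀ s - v₀ s) + γ * (∫ s', vhat₀ s' ∂(K s) - ∫ s', v₀ s' ∂(K s)) := by
      show vhat₀ s - v₀ s = _
      rw [h1', h2']; ring
    rw [hgoal, hintv]
  set N : (S → ℝ) → ℝ := fun f => Real.sqrt (∫ s, f s ^ 2 ∂μ) with hN
  have hmemg : MemLp g 2 μ := crb_memℒp hgm hgb
  have hmemh : MemLp (fun s => h₀ s - v₀ s) 2 μ :=
    crb_memℒp (hh₀m.sub hv₀m) (fun s => (abs_sub _ _).trans (add_le_add (hC₃ s) (hC₀ s)))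
  have hmemKg : MemLp (fun s => γ * Kg s) 2 μ :=
    crb_memℒp (hKgm.const_mul γ) (fun s => by
      rw [abs_mul, abs_of_nonneg hγ0]
      exact mul_le_mul_of_nonneg_left (hKgb s) hγ0)
  have hNg_eq : N g = N (fun s => (h₀ s - v₀ s) + γ * Kg s) := by
    have hsq : (fun s => g s ^ 2) =ᵐ[μ] fun s => ((h₀ s - v₀ s) + γ * Kg s) ^ 2 :=
      hdecomp.mono fun s hs => congrArg (· ^ 2) hs
    show Real.sqrt (∫ s, g s ^ 2 ∂μ) = Real.sqrt (∫ s, ((h₀ s - v₀ s) + γ * Kg s) ^ 2 ∂μ)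
    rw [integral_congr_ae hsq]
  have hNgamma : N (fun s => γ * Kg s) ≤ γ * N g := by
    show Real.sqrt (∫ s, (γ * Kg s) ^ 2 ∂μ) ≤ γ * Real.sqrt (∫ s, g s ^ 2 ∂μ)
    have hmul : ∫ s, (γ * Kg s) ^ 2 ∂μ = γ ^ 2 * ∫ s, Kg s ^ 2 ∂μ := by
      rw [← integral_const_mul]
      exact integral_congr_ae (Filter.Eventually.of_forall fun s => by ring)
    rw [hmul, Real.sqrt_mul (sq_nonneg γ), Real.sqrt_sq hγ0]
    exact mul_le_mul_of_nonneg_left (Real.sqrt_le_sqrt hcontract) hγ0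
  have hkey : N g ≤ N (fun s => h₀ s - v₀ s) + γ * N g :=
    calc N g = N (fun s => (h₀ s - v₀ s) + γ * Kg s) := hNg_eq
      _ ≤ N (fun s => h₀ s - v₀ s) + N (fun s => γ * Kg s) := crb_triangle hmemh hmemKg
      _ ≤ N (fun s => h₀ s - v₀ s) + γ * N g := add_le_add_right hNgamma _
  have h1γ : 0 < 1 - γ := by linarith
  have hNg_bound : N g ≤ (1 / (1 - γ)) * N (fun s => h₀ s - v₀ s) := by
    rw [div_mul_eq_mul_div, one_mul, le_div_iff₀ h1γ]
    nlinarith [hkey]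
  have hfinal : N (fun s => vhat s - v₀ s) ≤ N (fun s => vhat s - vhat₀ s) + N g := by
    have heq : ∀ s, vhat s - v₀ s = (vhat s - vhat₀ s) + g s := fun s => by
      show _ = _ + (vhat₀ s - v₀ s); ring
    show Real.sqrt (∫ s, (vhat s - v₀ s) ^ 2 ∂μ) ≤ _
    calc Real.sqrt (∫ s, (vhat s - v₀ s) ^ 2 ∂μ)
        = Real.sqrt (∫ s, ((vhat s - vhat₀ s) + g s) ^ 2 ∂μ) := by
          congr 1; exact integral_congr_ae (Filter.Eventually.of_forall fun s => by simp only [heq s])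
      _ ≤ _ := crb_triangle
          (crb_memℒp (hvhatm.sub hvhat₀m)
            (fun s => (abs_sub _ _).trans (add_le_add (hC₂ s) (hC₁ s)))) hmemg
  calc Real.sqrt (∫ s, (vhat s - v₀ s) ^ 2 ∂μ)
      ≤ N (fun s => vhat s - vhat₀ s) + N g := hfinal
    _ ≤ N (fun s => vhat s - vhat₀ s) + (1 / (1 - γ)) * N (fun s => h₀ s - v₀ s) := by
        exact add_le_add_right hNg_bound _
    _ = (1 / (1 - γ)) * N (fun s => h₀ s - v₀ s) + N (fun s => vhat s - vhat₀ s) := by ring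
end

section
/- Let S be a measurable space, γ ∈ [0,1), P a Markov kernel on S with operator (Pf)(s) := ∫ f(s') P(s, ds'), and r : S → ℝ bounded measurable, and let v₀ : S → ℝ be bounded measurable with v₀ = r + γ·P v₀ pointwise. Let K be a Markov kernel on S and μ a probability measure stationary for K, and let r̃, h₀, u : S → ℝ be bounded measurable such that: (i) u = r̃ + γ·K u holds μ-almost everywhere (u is the fixed point of the projected Bellman operator with coarsened kernel K and coarsened reward r̃); and (ii) r̃ + γ·K v₀ = h₀ holds μ-almost everywhere (h₀ is the projection of v₀). Then ‖u − v₀‖_{L²(μ)} ≤ (1/(1−γ))·‖h₀ − v₀‖_{L²(μ)}. -/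
open MeasureTheory ProbabilityTheory
open scoped RealInnerProductSpace

section Aux

variable {S : Type*} [MeasurableSpace S]

lemma aux_memℒp_two {ν : Measure S} [IsProbabilityMeasure ν] {f : S → ℝ} {C : ℝ}
    (hfm : Measurable f) (hfb : ∀ s, |f s| ≤ C) : MemLp f 2 ν :=
  (memLp_top_of_bound hfm.aestronglyMeasurable C
    (Filter.Eventually.of_forall fun s => by simpa using hfb s)).mono_exponent le_top

lemma aux_integrable {ν : Measure S} [IsProbabilityMeasure ν] {f : S → ℝ} {C : ℝ}
    (hfm : Measurable f) (hfb : ∀ s, |f s| ≤ C) : Integrable f ν :=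
  memLp_one_iff_integrable.mp ((memLp_top_of_bound hfm.aestronglyMeasurable C
    (Filter.Eventually.of_forall fun s => by simpa using hfb s)).mono_exponent le_top)

/-- Jensen (Cauchy–Schwarz) for a probability measure: `(∫ f)² ≤ ∫ f²`. -/
lemma aux_jensen {ν : Measure S} [IsProbabilityMeasure ν] {f : S → ℝ} {C : ℝ}
    (hfm : Measurable f) (hfb : ∀ s, |f s| ≤ C) :
    (∫ x, f x ∂ν) ^ 2 ≤ ∫ x, f x ^ 2 ∂ν := by
  have hmem : MemLp f 2 ν := aux_memℒp_two hfm hfb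
  have h := variance_nonneg f ν
  rw [variance_eq_sub hmem] at h
  have he : ∫ x, (f ^ 2) x ∂ν = ∫ x, f x ^ 2 ∂ν := by simp [Pi.pow_apply]
  simp only [he] at h
  linarith

/-- Measurability of `s ↦ ∫ f ∂(K s)`. -/
lemma aux_meas_kernel_integral (K : Kernel S S) [IsMarkovKernel K] {f : S → ℝ}
    (hfm : Measurable f) : Measurable fun s => ∫ x, f x ∂(K s) := by
  have h : StronglyMeasurable (Function.uncurry fun (_ : S) (y : S) => f y) :=
    (hfm.comp measurable_snd).stronglyMeasurable
  exact (h.integral_kernel_prod_right (κ := K)).measurable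

lemma aux_bound_kernel_integral (K : Kernel S S) [IsMarkovKernel K] {f : S → ℝ} {C : ℝ}
    (hfb : ∀ s, |f s| ≤ C) (s : S) : |∫ x, f x ∂(K s)| ≤ C := by
  have h := norm_integral_le_of_norm_le_const (μ := K s) (C := C)
    (Filter.Eventually.of_forall fun x => by
      rw [Real.norm_eq_abs]; exact hfb x)
  rw [Real.norm_eq_abs] at h
  simpa [measure_univ] using h

/-- Stationarity: for nonneg bounded measurable `q`, `∫ s, ∫ q ∂(K s) ∂μ = ∫ q ∂μ`. -/
lemma aux_stationary (K : Kernel S S) [IsMarkovKernel K]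
    (μ : Measure S) [IsProbabilityMeasure μ]
    (hstat : μ.bind (fun s => K s) = μ) {q : S → ℝ} {C : ℝ}
    (hqm : Measurable q) (hq0 : ∀ s, 0 ≤ q s) (hqb : ∀ s, |q s| ≤ C) :
    ∫ s, (∫ x, q x ∂(K s)) ∂μ = ∫ x, q x ∂μ := by
  set Q : S → ENNReal := fun x => ENNReal.ofReal (q x) with hQ
  have hQm : Measurable Q := ENNReal.measurable_ofReal.comp hqm
  have step1 : ∀ (ν : Measure S), ∫ x, q x ∂ν = (∫⁻ x, Q x ∂ν).toReal := fun ν =>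
    integral_eq_lintegral_of_nonneg_ae (Filter.Eventually.of_forall hq0)
      hqm.aestronglyMeasurable
  have hfin : ∀ (ν : Measure S), IsProbabilityMeasure ν → ∫⁻ x, Q x ∂ν ≠ ⊤ := by
    intro ν hν
    have hle : ∫⁻ x, Q x ∂ν ≤ ENNReal.ofReal C := by
      have := lintegral_mono (μ := ν) (fun x =>
        ENNReal.ofReal_le_ofReal (le_trans (le_abs_self _) (hqb x)))
      simpa [lintegral_const, measure_univ] using this
    exact ne_top_of_le_ne_top ENNReal.ofReal_ne_top hle
  set g : S → ℝ := fun s => ∫ x, q x ∂(K s) with hgdef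
  have hg0 : ∀ s, 0 ≤ g s := fun s => integral_nonneg hq0
  have hgm : Measurable g := aux_meas_kernel_integral K hqm
  have hofg : ∀ s, ENNReal.ofReal (g s) = ∫⁻ x, Q x ∂(K s) := by
    intro s
    rw [hgdef]; simp only
    rw [step1 (K s), ENNReal.ofReal_toReal (hfin (K s) inferInstance)]
  calc ∫ s, g s ∂μ = (∫⁻ s, ENNReal.ofReal (g s) ∂μ).toReal :=
        integral_eq_lintegral_of_nonneg_ae (Filter.Eventually.of_forall hg0)
          hgm.aestronglyMeasurable
    _ = (∫⁻ s, ∫⁻ x, Q x ∂(K s) ∂μ).toReal := by simp_rw [hofg]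
    _ = (∫⁻ x, Q x ∂(μ.bind fun s => K s)).toReal := by
        rw [Measure.lintegral_bind K.measurable.aemeasurable hQm.aemeasurable]
    _ = (∫⁻ x, Q x ∂μ).toReal := by rw [hstat]
    _ = ∫ x, q x ∂μ := (step1 μ).symm

/-- `√(∫ f²) = ‖toLp f‖` in `L²`. -/
lemma aux_sqrt_eq_norm {μ : Measure S} {f : S → ℝ} (hf : MemLp f 2 μ) :
    Real.sqrt (∫ s, f s ^ 2 ∂μ) = ‖hf.toLp f‖ := by
  have h1 : ∫ s, f s ^ 2 ∂μ = ∫ s, (hf.toLp f : S → ℝ) s ^ 2 ∂μ :=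
    integral_congr_ae ((hf.coeFn_toLp.symm).mono fun s hs => by simp only [hs])
  have h2 : (inner ℝ (hf.toLp f) (hf.toLp f) : ℝ) = ∫ s, (hf.toLp f : S → ℝ) s ^ 2 ∂μ := by
    rw [L2.inner_def]
    refine integral_congr_ae (Filter.Eventually.of_forall fun s => ?_)
    simp [RCLike.inner_apply, sq]
  rw [h1, ← h2, real_inner_self_eq_norm_sq, Real.sqrt_sq (norm_nonneg _)]

end Aux

/-- Approximation-error bound for the projected (coarsened) Bellman fixed point:
if `u` is the fixed point of the projected Bellman operator `u = r̃ + γ K u` (μ-a.e.),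
`h₀` is the projection of the true value `v₀` (`r̃ + γ K v₀ = h₀` μ-a.e.), and `μ` is
stationary for the coarsened kernel `K`, then
`‖u − v₀‖_{L²(μ)} ≤ (1-γ)⁻¹ ‖h₀ − v₀‖_{L²(μ)}`. -/
theorem projected_fixed_point_approximation_error
    {S : Type*} [MeasurableSpace S]
    (γ : ℝ) (hγ0 : 0 ≤ γ) (hγ1 : γ < 1)
    (P : Kernel S S) [IsMarkovKernel P]
    (r : S → ℝ) (hr : Measurable r) (hrb : ∃ C, ∀ s, |r s| ≤ C)
    (v₀ : S → ℝ) (hv₀m : Measurable v₀) (hv₀b : ∃ C, ∀ s, |v₀ s| ≤ C)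
    (hfix : ∀ s, v₀ s = r s + γ * ∫ s', v₀ s' ∂(P s))
    (K : Kernel S S) [IsMarkovKernel K]
    (μ : Measure S) [IsProbabilityMeasure μ]
    (hstat : μ.bind (fun s => K s) = μ)
    (rtil h₀ u : S → ℝ)
    (hrtilm : Measurable rtil) (hrtilb : ∃ C, ∀ s, |rtil s| ≤ C)
    (hh₀m : Measurable h₀) (hh₀b : ∃ C, ∀ s, |h₀ s| ≤ C)
    (hum : Measurable u) (hub : ∃ C, ∀ s, |u s| ≤ C)
    -- (i) u is the fixed point of the projected Bellman operator
    (hfix' : u =ᵐ[μ] fun s => rtil s + γ * ∫ s', u s' ∂(K s))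
    -- (ii) h₀ is the projection of v₀
    (hproj : (fun s => rtil s + γ * ∫ s', v₀ s' ∂(K s)) =ᵐ[μ] h₀) :
    Real.sqrt (∫ s, (u s - v₀ s) ^ 2 ∂μ)
      ≤ (1 / (1 - γ)) * Real.sqrt (∫ s, (h₀ s - v₀ s) ^ 2 ∂μ) := by
  obtain ⟨Cu, hCu⟩ := hub
  obtain ⟨Cv, hCv⟩ := hv₀b
  obtain ⟨Ch, hCh⟩ := hh₀b
  -- the error functions
  set f : S → ℝ := fun s => u s - v₀ s with hfdef
  set g : S → ℝ := fun s => h₀ s - v₀ s with hgdef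
  have hfm : Measurable f := hum.sub hv₀m
  have hgm : Measurable g := hh₀m.sub hv₀m
  have hfb : ∀ s, |f s| ≤ Cu + Cv := fun s =>
    (abs_sub (u s) (v₀ s)).trans (add_le_add (hCu s) (hCv s))
  have hgb : ∀ s, |g s| ≤ Ch + Cv := fun s =>
    (abs_sub (h₀ s) (v₀ s)).trans (add_le_add (hCh s) (hCv s))
  set Kf : S → ℝ := fun s => ∫ x, f x ∂(K s) with hKfdef
  have hKfm : Measurable Kf := aux_meas_kernel_integral K hfm
  have hKfb : ∀ s, |Kf s| ≤ Cu + Cv := aux_bound_kernel_integral K hfb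
  -- membership in L²
  have hf2 : MemLp f 2 μ := aux_memℒp_two hfm hfb
  have hg2 : MemLp g 2 μ := aux_memℒp_two hgm hgb
  have hKf2 : MemLp Kf 2 μ := aux_memℒp_two hKfm hKfb
  -- a.e. identity: f = γ • Kf + g
  have hae : f =ᵐ[μ] fun s => γ * Kf s + g s := by
    filter_upwards [hfix', hproj] with s h1 h2
    simp only [hfdef, hKfdef, hgdef]
    rw [integral_sub (aux_integrable hum hCu) (aux_integrable hv₀m hCv), h1, ← h2]
    ring
  -- Lp elements
  set F := hf2.toLp f with hF
  set G := hg2.toLp g with hG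
  set KF := hKf2.toLp Kf with hKF
  -- Jensen + stationarity: ‖KF‖ ≤ ‖F‖
  have hKint : ∀ s, (∫ x, f x ∂(K s)) ^ 2 ≤ ∫ x, f x ^ 2 ∂(K s) := fun s =>
    aux_jensen (ν := K s) hfm hfb
  have hsqb : ∀ s, |f s ^ 2| ≤ (Cu + Cv) ^ 2 := by
    intro s
    rw [abs_pow]
    exact pow_le_pow_left₀ (abs_nonneg _) (hfb s) 2
  have hint1 : Integrable (fun s => Kf s ^ 2) μ :=
    aux_integrable (hKfm.pow_const 2) (C := (Cu + Cv) ^ 2) (fun s => by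
      rw [abs_pow]
      exact pow_le_pow_left₀ (abs_nonneg _) (hKfb s) 2)
  have hint2 : Integrable (fun s => ∫ x, f x ^ 2 ∂(K s)) μ :=
    aux_integrable (aux_meas_kernel_integral K (hfm.pow_const 2))
      (aux_bound_kernel_integral K hsqb)
  have hmono : ∫ s, Kf s ^ 2 ∂μ ≤ ∫ s, (∫ x, f x ^ 2 ∂(K s)) ∂μ :=
    integral_mono hint1 hint2 fun s => hKint s
  have hstat' : ∫ s, (∫ x, f x ^ 2 ∂(K s)) ∂μ = ∫ x, f x ^ 2 ∂μ :=
    aux_stationary K μ hstat (hfm.pow_const 2) (fun s => sq_nonneg _) hsqb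
  have hKFle : ‖KF‖ ≤ ‖F‖ := by
    rw [← aux_sqrt_eq_norm hKf2, ← aux_sqrt_eq_norm hf2]
    exact Real.sqrt_le_sqrt (hmono.trans_eq hstat')
  -- F = γ • KF + G in Lp
  have hFeq : F = γ • KF + G := by
    rw [hF, hG, hKF, ← MemLp.toLp_const_smul γ hKf2, ← MemLp.toLp_add]
    exact MemLp.toLp_congr _ _ hae
  -- norm inequality
  have hnorm : ‖F‖ ≤ γ * ‖F‖ + ‖G‖ := by
    calc ‖F‖ = ‖γ • KF + G‖ := by rw [hFeq]
      _ ≤ ‖γ • KF‖ + ‖G‖ := norm_add_le _ _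
      _ = γ * ‖KF‖ + ‖G‖ := by rw [norm_smul, Real.norm_of_nonneg hγ0]
      _ ≤ γ * ‖F‖ + ‖G‖ := by
          have := mul_le_mul_of_nonneg_left hKFle hγ0
          linarith
  have hfinal : ‖F‖ ≤ (1 / (1 - γ)) * ‖G‖ := by
    rw [div_mul_eq_mul_div, one_mul, le_div_iff₀ (by linarith)]
    linarith
  calc Real.sqrt (∫ s, (u s - v₀ s) ^ 2 ∂μ) = ‖F‖ := aux_sqrt_eq_norm hf2
    _ ≤ (1 / (1 - γ)) * ‖G‖ := hfinal
    _ = (1 / (1 - γ)) * Real.sqrt (∫ s, (h₀ s - v₀ s) ^ 2 ∂μ) := by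
        rw [aux_sqrt_eq_norm hg2]
end
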